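/- Let H and D be complex Hilbert spaces, U a unitary operator on H, B : D → H a linear isometry, Γ a strict contraction on D, and T := U + B(Γ − I)B*U (a contraction). Then for every z in the open unit disc 𝔻, B*(−T + zD_{T*}(I − zT*)⁻¹D_T)U*B = −Γ + D_{Γ*}F₁(z)[I − (Γ* − I)F₁(z)]⁻¹D_Γ, where F₁(z) := zB*(I − zU*)⁻¹U*B (and the inverted operators are indeed invertible for z ∈ 𝔻). -/

import Mathlib

set_option synthInstance.maxHeartbeats 1000000
set_option maxHeartbeats 2000000

open ContinuousLinearMap

section Helpers

variable {H D : Type*} [NormedAddCommGroup H] [InnerProductSpace ℂ H] [CompleteSpace H]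
    [NormedAddCommGroup D] [InnerProductSpace ℂ D] [CompleteSpace D]

private theorem defect_nonneg' (A : H →L[ℂ] H) (hA : ‖A‖ ≤ 1) :
    (0 : H →L[ℂ] H) ≤ 1 - star A * A := by
  rw [ContinuousLinearMap.nonneg_iff_isPositive, isPositive_def']
  constructor
  · rw [IsSelfAdjoint]
    simp [star_sub, star_mul]
  · intro x
    have key : (1 - star A * A).reApplyInnerSelf x
        = Complex.re (inner ℂ x x) - Complex.re (inner ℂ (A x) (A x)) := by
      simp [reApplyInnerSelf, ContinuousLinearMap.sub_apply, mul_apply,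
        inner_sub_left, star_eq_adjoint, adjoint_inner_left]
    have h1 : ‖A x‖ ≤ ‖x‖ := by
      calc ‖A x‖ ≤ ‖A‖ * ‖x‖ := A.le_opNorm x
        _ ≤ 1 * ‖x‖ := by gcongr
        _ = ‖x‖ := one_mul _
    have e1 : Complex.re (inner ℂ x x) = ‖x‖ ^ 2 := by
      simpa using inner_self_eq_norm_sq (𝕜 := ℂ) (x := _)
    have e2 : Complex.re (inner ℂ (A x) (A x)) = ‖A x‖ ^ 2 := by
      simpa using inner_self_eq_norm_sq (𝕜 := ℂ) (x := _)
    rw [key, e1, e2]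
    nlinarith [norm_nonneg (A x), norm_nonneg x]

private theorem norm_le_one_of_defect' (A : H →L[ℂ] H)
    (h : (0 : H →L[ℂ] H) ≤ 1 - star A * A) : ‖A‖ ≤ 1 := by
  rw [ContinuousLinearMap.nonneg_iff_isPositive] at h
  refine opNorm_le_bound A (by norm_num) fun x => ?_
  have key : (1 - star A * A).reApplyInnerSelf x
      = Complex.re (inner ℂ x x) - Complex.re (inner ℂ (A x) (A x)) := by
    simp [reApplyInnerSelf, ContinuousLinearMap.sub_apply, mul_apply,
      inner_sub_left, star_eq_adjoint, adjoint_inner_left]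
  have h2 := h.2 x
  rw [key] at h2
  have e1 : Complex.re (inner ℂ x x) = ‖x‖ ^ 2 := by
    simpa using inner_self_eq_norm_sq (𝕜 := ℂ) (x := _)
  have e2 : Complex.re (inner ℂ (A x) (A x)) = ‖A x‖ ^ 2 := by
    simpa using inner_self_eq_norm_sq (𝕜 := ℂ) (x := _)
  rw [e1, e2] at h2
  rw [one_mul]
  nlinarith [norm_nonneg (A x), norm_nonneg x]

private theorem isUnit_swap' (X : D →L[ℂ] H) (Y : H →L[ℂ] D)
    (h : IsUnit ((1 : H →L[ℂ] H) - X ∘L Y)) :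
    IsUnit ((1 : D →L[ℂ] D) - Y ∘L X) := by
  obtain ⟨u, hu⟩ := h
  set c : H →L[ℂ] H := ↑u⁻¹ with hc
  have h1 : ((1 : H →L[ℂ] H) - X ∘L Y) ∘L c = 1 := by
    rw [← mul_def, ← hu]; exact u.mul_inv
  have h2 : c ∘L ((1 : H →L[ℂ] H) - X ∘L Y) = 1 := by
    rw [← mul_def, ← hu]; exact u.inv_mul
  refine ⟨⟨1 - Y ∘L X, 1 + Y ∘L c ∘L X, ?_, ?_⟩, rfl⟩
  · rw [mul_def]
    have expand : ((1 : D →L[ℂ] D) - Y ∘L X) ∘L (1 + Y ∘L c ∘L X)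
        = 1 + Y ∘L (((1 - X ∘L Y) ∘L c - 1) ∘L X) := by
      simp only [comp_sub, sub_comp, comp_add, add_comp, one_def, id_comp, comp_id, comp_assoc]
      abel
    rw [expand, h1]
    simp [one_def]
  · rw [mul_def]
    have expand : ((1 : D →L[ℂ] D) + Y ∘L c ∘L X) ∘L (1 - Y ∘L X)
        = 1 + Y ∘L ((c ∘L (1 - X ∘L Y) - 1) ∘L X) := by
      simp only [comp_sub, sub_comp, comp_add, add_comp, one_def, id_comp, comp_id, comp_assoc]
      abel
    rw [expand, h2]
    simp [one_def]

private theorem sqrt_conj' (C : D →L[ℂ] H) (hC : adjoint C ∘L C = 1) (M : D →L[ℂ] D)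
    (hM : 0 ≤ M) :
    CFC.sqrt (C ∘L M ∘L adjoint C) = C ∘L CFC.sqrt M ∘L adjoint C := by
  have hs : (0 : D →L[ℂ] D) ≤ CFC.sqrt M := CFC.sqrt_nonneg M
  refine CFC.sqrt_unique ?_ ?_
  · rw [mul_def]
    calc (C ∘L CFC.sqrt M ∘L adjoint C) ∘L (C ∘L CFC.sqrt M ∘L adjoint C)
        = C ∘L (CFC.sqrt M ∘L ((adjoint C ∘L C) ∘L (CFC.sqrt M ∘L adjoint C))) := by
          simp only [comp_assoc]
      _ = C ∘L ((CFC.sqrt M * CFC.sqrt M) ∘L adjoint C) := by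
          rw [hC]; simp only [one_def, id_comp, ← mul_def, comp_assoc, mul_def]
      _ = C ∘L M ∘L adjoint C := by rw [CFC.sqrt_mul_sqrt_self M hM]
  · rw [ContinuousLinearMap.nonneg_iff_isPositive] at hs ⊢
    exact hs.conj_adjoint C

private theorem comp_cancel' {E F G : Type*} [NormedAddCommGroup E] [NormedAddCommGroup F]
    [NormedAddCommGroup G] [InnerProductSpace ℂ E] [InnerProductSpace ℂ F]
    [InnerProductSpace ℂ G]
    (f : F →L[ℂ] E) (g : E →L[ℂ] F) (h : f ∘L g = 1) (t : G →L[ℂ] E) :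
    f ∘L (g ∘L t) = t := by rw [← comp_assoc, h, one_def, id_comp]

private theorem ring_inverse_eq' {R : Type*} [MonoidWithZero R] (a b : R) (h : IsUnit a)
    (hab : a * b = 1) : Ring.inverse a = b := by
  rw [← mul_one (Ring.inverse a), ← hab, ← mul_assoc, Ring.inverse_mul_cancel _ h, one_mul]

end Helpers

/-- Equation (4.2)/(A.1): the characteristic function of the contraction
`T = U + B (Γ - I) B* U` (with `U` unitary, `B` an isometry, `Γ` a strict contraction)
is given (in the coordinates `V = B* U`, `V* = B*`) by
`B* (-T + z D_{T*} (I - z T*)⁻¹ D_T) U* B = -Γ + D_{Γ*} F₁(z) [I - (Γ* - I) F₁(z)]⁻¹ D_Γ`,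
where `F₁(z) = z B* (I - z U*)⁻¹ U* B` and `D_A = (I - A*A)^{1/2}`. -/
theorem characteristic_function_formula
    {H D : Type*} [NormedAddCommGroup H] [InnerProductSpace ℂ H] [CompleteSpace H]
    [NormedAddCommGroup D] [InnerProductSpace ℂ D] [CompleteSpace D]
    (U : H →L[ℂ] H) (hU : U ∈ unitary (H →L[ℂ] H))
    (B : D →L[ℂ] H) (hB : ∀ x : D, ‖B x‖ = ‖x‖)
    (Γ : D →L[ℂ] D) (hΓ : ∀ x : D, x ≠ 0 → ‖Γ x‖ < ‖x‖)
    (T : H →L[ℂ] H) (hT : T = U + B ∘L (Γ - 1) ∘L adjoint B ∘L U)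
    (z : ℂ) (hz : ‖z‖ < 1)
    (F₁ : D →L[ℂ] D)
    (hF₁ : F₁ = z • (adjoint B ∘L Ring.inverse (1 - z • adjoint U) ∘L adjoint U ∘L B)) :
    IsUnit (1 - z • adjoint T) ∧
    IsUnit ((1 : D →L[ℂ] D) - (adjoint Γ - 1) ∘L F₁) ∧
    adjoint B ∘L
        (-T + z • (CFC.sqrt (1 - T * star T) ∘L Ring.inverse (1 - z • adjoint T) ∘L
          CFC.sqrt (1 - star T * T))) ∘L adjoint U ∘L B =
      -Γ + CFC.sqrt (1 - Γ * star Γ) ∘L F₁ ∘L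
        Ring.inverse ((1 : D →L[ℂ] D) - (adjoint Γ - 1) ∘L F₁) ∘L
          CFC.sqrt (1 - star Γ * Γ) := by
  -- basic identities
  have hBB : adjoint B ∘L B = 1 := by
    let li : D →ₗᵢ[ℂ] H := ⟨B.toLinearMap, hB⟩
    ext x
    refine ext_inner_right ℂ fun y => ?_
    have : (inner ℂ (B x) (B y) : ℂ) = inner ℂ x y := li.inner_map_map x y
    simpa [adjoint_inner_left] using this
  rw [Unitary.mem_iff] at hU
  have hUU : adjoint U ∘L U = 1 := by rw [← star_eq_adjoint, ← mul_def]; exact hU.1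
  have hUU' : U ∘L adjoint U = 1 := by rw [← star_eq_adjoint, ← mul_def]; exact hU.2
  -- cancellation forms
  have cBBd : ∀ (t : D →L[ℂ] D), adjoint B ∘L (B ∘L t) = t := fun t => comp_cancel' _ _ hBB t
  have cBBh : ∀ (t : H →L[ℂ] D), adjoint B ∘L (B ∘L t) = t := fun t => comp_cancel' _ _ hBB t
  have cUUd : ∀ (t : D →L[ℂ] H), adjoint U ∘L (U ∘L t) = t := fun t => comp_cancel' _ _ hUU t
  have cUUh : ∀ (t : H →L[ℂ] H), adjoint U ∘L (U ∘L t) = t := fun t => comp_cancel' _ _ hUU t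
  have cUU'd : ∀ (t : D →L[ℂ] H), U ∘L (adjoint U ∘L t) = t := fun t => comp_cancel' _ _ hUU' t
  have cUU'h : ∀ (t : H →L[ℂ] H), U ∘L (adjoint U ∘L t) = t := fun t => comp_cancel' _ _ hUU' t
  -- contraction facts
  have hΓn : ‖Γ‖ ≤ 1 := by
    refine opNorm_le_bound Γ (by norm_num) fun x => ?_
    rcases eq_or_ne x 0 with rfl | hx
    · simp
    · exact le_of_lt (by simpa using hΓ x hx)
  have hΓpos : (0 : D →L[ℂ] D) ≤ 1 - star Γ * Γ := defect_nonneg' Γ hΓn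
  have hΓpos' : (0 : D →L[ℂ] D) ≤ 1 - Γ * star Γ := by
    have := defect_nonneg' (star Γ) (by rwa [norm_star])
    rwa [star_star] at this
  -- the product factorization T = P U
  set P : H →L[ℂ] H := 1 + B ∘L ((Γ - 1) ∘L adjoint B) with hP
  have hTP : T = P ∘L U := by
    rw [hT, hP]
    simp only [add_comp, one_def, id_comp, comp_assoc]
  have hadjP : adjoint P = 1 + B ∘L ((adjoint Γ - 1) ∘L adjoint B) := by
    rw [hP]
    simp only [map_add, map_sub, adjoint_comp, adjoint_adjoint, adjoint_id, one_def, comp_assoc]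
  have hadjT : adjoint T = adjoint U + adjoint U ∘L (B ∘L ((adjoint Γ - 1) ∘L adjoint B)) := by
    rw [hT]
    simp only [map_add, map_sub, adjoint_comp, adjoint_adjoint, adjoint_id, one_def, comp_assoc]
  -- defect factorizations
  have hPPa : adjoint P ∘L P = 1 - B ∘L ((1 - star Γ * Γ) ∘L adjoint B) := by
    have hmid : (Γ - 1) + (adjoint Γ - 1) + (adjoint Γ - 1) * (Γ - 1)
        = -(1 - star Γ * Γ) := by
      rw [← star_eq_adjoint]; noncomm_ring
    calc adjoint P ∘L P
        = 1 + B ∘L ((((Γ - 1) + (adjoint Γ - 1) + (adjoint Γ - 1) * (Γ - 1))) ∘L adjoint B) := by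
          rw [hadjP, hP]
          simp only [comp_add, add_comp, one_def, id_comp, comp_id, comp_assoc, cBBh, mul_def]
          abel
      _ = 1 + B ∘L ((-(1 - star Γ * Γ)) ∘L adjoint B) := by rw [hmid]
      _ = 1 - B ∘L ((1 - star Γ * Γ) ∘L adjoint B) := by
          simp only [neg_comp, comp_neg]; abel
  have hPPa' : P ∘L adjoint P = 1 - B ∘L ((1 - Γ * star Γ) ∘L adjoint B) := by
    have hmid : (adjoint Γ - 1) + (Γ - 1) + (Γ - 1) * (adjoint Γ - 1)
        = -(1 - Γ * star Γ) := by
      rw [← star_eq_adjoint]; noncomm_ring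
    calc P ∘L adjoint P
        = 1 + B ∘L ((((adjoint Γ - 1) + (Γ - 1) + (Γ - 1) * (adjoint Γ - 1))) ∘L adjoint B) := by
          rw [hadjP, hP]
          simp only [comp_add, add_comp, one_def, id_comp, comp_id, comp_assoc, cBBh, mul_def]
          abel
      _ = 1 + B ∘L ((-(1 - Γ * star Γ)) ∘L adjoint B) := by rw [hmid]
      _ = 1 - B ∘L ((1 - Γ * star Γ) ∘L adjoint B) := by
          simp only [neg_comp, comp_neg]; abel
  have hDefT : (1 : H →L[ℂ] H) - star T * T
      = (adjoint U ∘L B) ∘L ((1 - star Γ * Γ) ∘L (adjoint B ∘L U)) := by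
    have h1 : star T * T = adjoint U ∘L ((adjoint P ∘L P) ∘L U) := by
      rw [star_eq_adjoint, hTP, mul_def]
      simp only [adjoint_comp, comp_assoc]
    rw [h1, hPPa]
    simp only [comp_sub, sub_comp, comp_assoc, one_def, id_comp, comp_id, hUU]
    abel
  have hDefT' : (1 : H →L[ℂ] H) - T * star T = B ∘L ((1 - Γ * star Γ) ∘L adjoint B) := by
    have h1 : T * star T = P ∘L adjoint P := by
      rw [star_eq_adjoint, hTP, mul_def]
      simp only [adjoint_comp, comp_assoc, cUU'h]
    rw [h1, hPPa']
    abel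
  have hCadj : adjoint (adjoint U ∘L B) = adjoint B ∘L U := by
    simp [adjoint_comp, adjoint_adjoint]
  have hCiso : adjoint (adjoint U ∘L B) ∘L (adjoint U ∘L B) = 1 := by
    rw [hCadj]
    simp only [comp_assoc, cUU'd, hBB]
  have hsqT : CFC.sqrt ((1 : H →L[ℂ] H) - star T * T)
      = (adjoint U ∘L B) ∘L CFC.sqrt (1 - star Γ * Γ) ∘L (adjoint B ∘L U) := by
    rw [hDefT, ← hCadj]
    exact sqrt_conj' _ hCiso _ hΓpos
  have hsqT' : CFC.sqrt ((1 : H →L[ℂ] H) - T * star T)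
      = B ∘L CFC.sqrt (1 - Γ * star Γ) ∘L adjoint B := by
    rw [hDefT']
    exact sqrt_conj' B hBB _ hΓpos'
  -- norm estimates and invertibility
  have hTpos : (0 : H →L[ℂ] H) ≤ 1 - star T * T := by
    rw [hDefT, ContinuousLinearMap.nonneg_iff_isPositive]
    have h2 := ((ContinuousLinearMap.nonneg_iff_isPositive _).mp hΓpos).conj_adjoint
      (adjoint U ∘L B)
    rwa [hCadj] at h2
  have hTn : ‖T‖ ≤ 1 := norm_le_one_of_defect' T hTpos
  have hUnit1 : IsUnit ((1 : H →L[ℂ] H) - z • adjoint T) := by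
    apply isUnit_one_sub_of_norm_lt_one
    calc ‖z • adjoint T‖ = ‖z‖ * ‖adjoint T‖ := norm_smul z _
      _ = ‖z‖ * ‖T‖ := by rw [← star_eq_adjoint, norm_star]
      _ ≤ ‖z‖ * 1 := by gcongr
      _ < 1 := by simpa using hz
  have hUn : ‖U‖ ≤ 1 := norm_le_one_of_defect' U (by rw [hU.1]; simp)
  have hUnitW : IsUnit ((1 : H →L[ℂ] H) - z • adjoint U) := by
    apply isUnit_one_sub_of_norm_lt_one
    calc ‖z • adjoint U‖ = ‖z‖ * ‖adjoint U‖ := norm_smul z _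
      _ = ‖z‖ * ‖U‖ := by rw [← star_eq_adjoint, norm_star]
      _ ≤ ‖z‖ * 1 := by gcongr
      _ < 1 := by simpa using hz
  -- invert 1 - z U* and set up the finite-dimensional-style algebra
  set W : H →L[ℂ] H := 1 - z • adjoint U with hW
  set R : H →L[ℂ] H := Ring.inverse W with hR
  have hWR : W ∘L R = 1 := by rw [← mul_def, hR]; exact Ring.mul_inverse_cancel _ hUnitW
  have hRW : R ∘L W = 1 := by rw [← mul_def, hR]; exact Ring.inverse_mul_cancel _ hUnitW
  have cWR : ∀ (t : D →L[ℂ] H), W ∘L (R ∘L t) = t := fun t => comp_cancel' _ _ hWR t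
  have cWRh : ∀ (t : H →L[ℂ] H), W ∘L (R ∘L t) = t := fun t => comp_cancel' _ _ hWR t
  have cRWh : ∀ (t : H →L[ℂ] H), R ∘L (W ∘L t) = t := fun t => comp_cancel' _ _ hRW t
  have hUnitR : IsUnit R := ⟨⟨R, W, by rw [mul_def]; exact hRW, by rw [mul_def]; exact hWR⟩, rfl⟩
  set K : D →L[ℂ] D := adjoint Γ - 1 with hK
  set X : D →L[ℂ] H := z • (R ∘L (adjoint U ∘L (B ∘L K))) with hX
  have hGK : adjoint B ∘L X = F₁ ∘L K := by
    rw [hX, hF₁]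
    simp only [comp_smul, smul_comp, comp_assoc]
  have cGK : ∀ (t : H →L[ℂ] D), adjoint B ∘L (X ∘L t) = F₁ ∘L (K ∘L t) := fun t => by
    rw [← comp_assoc, hGK, comp_assoc]
  have cGKd : ∀ (t : D →L[ℂ] D), adjoint B ∘L (X ∘L t) = F₁ ∘L (K ∘L t) := fun t => by
    rw [← comp_assoc, hGK, comp_assoc]
  have hfact : (1 : H →L[ℂ] H) - z • adjoint T = W ∘L (1 - X ∘L adjoint B) := by
    rw [hadjT]
    simp only [hX, comp_sub, sub_comp, comp_assoc, smul_comp, comp_smul, one_def,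
      id_comp, comp_id, cWR, cWRh, smul_add]
    rw [hW]
    simp only [one_def, sub_comp, smul_comp, id_comp]
    abel
  have hVform : (1 : H →L[ℂ] H) - X ∘L adjoint B = R ∘L ((1 : H →L[ℂ] H) - z • adjoint T) := by
    rw [hfact, cRWh]
  have hUnitV : IsUnit ((1 : H →L[ℂ] H) - X ∘L adjoint B) := by
    rw [hVform, ← mul_def]
    exact hUnitR.mul hUnit1
  have hUnitGK : IsUnit ((1 : D →L[ℂ] D) - F₁ ∘L K) := by
    have h := isUnit_swap' X (adjoint B) hUnitV
    rwa [hGK] at h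
  have hUnitKG : IsUnit ((1 : D →L[ℂ] D) - K ∘L F₁) := isUnit_swap' F₁ K hUnitGK
  set N : D →L[ℂ] D := Ring.inverse ((1 : D →L[ℂ] D) - F₁ ∘L K) with hN
  set M : D →L[ℂ] D := Ring.inverse ((1 : D →L[ℂ] D) - K ∘L F₁) with hM
  have a2 : N * ((1 : D →L[ℂ] D) - F₁ * K) = 1 := by
    rw [hN, mul_def]; exact Ring.inverse_mul_cancel _ hUnitGK
  have a1 : ((1 : D →L[ℂ] D) - F₁ * K) * N = 1 := by
    rw [hN, mul_def]; exact Ring.mul_inverse_cancel _ hUnitGK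
  have a3 : ((1 : D →L[ℂ] D) - K * F₁) * M = 1 := by
    rw [hM, mul_def]; exact Ring.mul_inverse_cancel _ hUnitKG
  have hNexp : N = 1 + F₁ * K * N := by
    have h := a1
    rw [sub_mul, one_mul] at h
    exact sub_eq_iff_eq_add.mp h
  have hGM : F₁ * M = N * F₁ := by
    have h5 : (N * F₁) * ((1 : D →L[ℂ] D) - K * F₁) = F₁ := by
      have comm : F₁ * ((1 : D →L[ℂ] D) - K * F₁) = ((1 : D →L[ℂ] D) - F₁ * K) * F₁ := by
        noncomm_ring
      calc (N * F₁) * ((1 : D →L[ℂ] D) - K * F₁)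
          = N * (((1 : D →L[ℂ] D) - F₁ * K) * F₁) := by rw [mul_assoc, comm]
        _ = (N * ((1 : D →L[ℂ] D) - F₁ * K)) * F₁ := by rw [mul_assoc]
        _ = F₁ := by rw [a2, one_mul]
    calc F₁ * M = ((N * F₁) * ((1 : D →L[ℂ] D) - K * F₁)) * M := by rw [h5]
      _ = (N * F₁) * (((1 : D →L[ℂ] D) - K * F₁) * M) := by rw [mul_assoc]
      _ = N * F₁ := by rw [a3, mul_one]
  have hDkey : F₁ + F₁ * (K * (N * F₁)) = F₁ * M := by
    rw [hGM]
    conv_rhs => rw [hNexp]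
    noncomm_ring
  -- inverse of 1 - z T*
  have hzero : N - (1 + F₁ * K * N) = 0 := sub_eq_zero_of_eq hNexp
  have hVinv : ((1 : H →L[ℂ] H) - X ∘L adjoint B) ∘L (1 + X ∘L (N ∘L adjoint B)) = 1 := by
    calc ((1 : H →L[ℂ] H) - X ∘L adjoint B) ∘L (1 + X ∘L (N ∘L adjoint B))
        = 1 + X ∘L ((N - (1 + F₁ * K * N)) ∘L adjoint B) := by
          simp only [comp_add, add_comp, comp_sub, sub_comp, one_def, id_comp, comp_id,
            comp_assoc, cGK, mul_def]
          abel
      _ = 1 := by rw [hzero]; simp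
  have hSform : Ring.inverse ((1 : H →L[ℂ] H) - z • adjoint T)
      = (1 + X ∘L (N ∘L adjoint B)) ∘L R := by
    apply ring_inverse_eq' _ _ hUnit1
    rw [mul_def, hfact]
    calc (W ∘L (1 - X ∘L adjoint B)) ∘L ((1 + X ∘L (N ∘L adjoint B)) ∘L R)
        = W ∘L ((((1 : H →L[ℂ] H) - X ∘L adjoint B) ∘L (1 + X ∘L (N ∘L adjoint B))) ∘L R) := by
          simp only [comp_assoc]
      _ = W ∘L R := by rw [hVinv, one_def, id_comp]
      _ = 1 := hWR
  -- the resolvent identity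
  have hres : z • (adjoint B ∘L (Ring.inverse ((1 : H →L[ℂ] H) - z • adjoint T)
        ∘L (adjoint U ∘L B))) = F₁ ∘L M := by
    rw [hSform]
    have expand : adjoint B ∘L (((1 + X ∘L (N ∘L adjoint B)) ∘L R) ∘L (adjoint U ∘L B))
        = adjoint B ∘L (R ∘L (adjoint U ∘L B))
          + F₁ ∘L (K ∘L (N ∘L (adjoint B ∘L (R ∘L (adjoint U ∘L B))))) := by
      simp only [comp_add, add_comp, one_def, id_comp, comp_assoc]
      rw [cGKd]
    rw [expand, smul_add, ← hF₁]
    have h2 : z • (F₁ ∘L (K ∘L (N ∘L (adjoint B ∘L (R ∘L (adjoint U ∘L B))))))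
        = F₁ ∘L (K ∘L (N ∘L F₁)) := by
      rw [hF₁]
      simp only [comp_smul]
    rw [h2]
    simpa only [mul_def] using hDkey
  refine ⟨hUnit1, hUnitKG, ?_⟩
  have e1' : adjoint B ∘L (T ∘L (adjoint U ∘L B)) = Γ := by
    rw [hTP]
    simp only [hP, add_comp, comp_add, one_def, id_comp, comp_id, comp_assoc, cUU'd,
      cBBd, cBBh, hBB]
    abel
  have sandwich := congrArg (fun w => CFC.sqrt ((1 : D →L[ℂ] D) - Γ * star Γ) ∘L
      (w ∘L CFC.sqrt ((1 : D →L[ℂ] D) - star Γ * Γ))) hres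
  simp only [comp_smul, smul_comp, comp_assoc] at sandwich
  rw [hsqT', hsqT]
  simp only [comp_add, add_comp, neg_comp, comp_neg, smul_comp, comp_smul, comp_assoc,
    one_def, id_comp, comp_id, cBBd, cBBh, cUU'd, cUU'h, hBB, e1']
  simp only [← one_def]
  rw [sandwich]
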